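/- Gronwall-type inequality with square-root nonlinearity: Let ζ be nonnegative and continuously differentiable on [t₀, t₁), let f be nonnegative and continuous on [t₀, t₁), and let u be nonnegative and continuous on [t₀, t₁) satisfying u(t) ≤ ζ(t) + ∫_{t₀}^{t} f(s) √(u(s)) ds for all t in [t₀, t₁). Then for all t in [t₀, t₁), u(t) ≤ ( √( ζ(t₀) + ∫_{t₀}^{t} |ζ'(s)| ds ) + (1/2) ∫_{t₀}^{t} f(s) ds )². -/
import Mathlib


open Set intervalIntegral

private lemma prim_deriv' {a b : ℝ} {g : ℝ → ℝ} (hg : ContinuousOn g (Set.Icc a b))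
    {t : ℝ} (ht : t ∈ Set.Ioo a b) :
    HasDerivAt (fun x => ∫ s in a..x, g s) (g t) t := by
  have hsub : Set.uIcc a t ⊆ Set.Icc a b := by
    rw [Set.uIcc_of_le ht.1.le]
    exact Set.Icc_subset_Icc le_rfl ht.2.le
  exact intervalIntegral.integral_hasDerivAt_right
    ((hg.mono hsub).intervalIntegrable)
    ((hg.mono Set.Ioo_subset_Icc_self).stronglyMeasurableAtFilter isOpen_Ioo t ht)
    ((hg.mono Set.Ioo_subset_Icc_self).continuousAt (Ioo_mem_nhds ht.1 ht.2))

private lemma prim_cont' {a b : ℝ} (hab : a ≤ b) {g : ℝ → ℝ}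
    (hg : ContinuousOn g (Set.Icc a b)) :
    ContinuousOn (fun x => ∫ s in a..x, g s) (Set.Icc a b) := by
  have h := intervalIntegral.continuousOn_primitive_interval
    (f := g) (μ := MeasureTheory.volume) (a := a) (b := b) ?_
  · rwa [Set.uIcc_of_le hab] at h
  · rw [Set.uIcc_of_le hab]
    exact hg.integrableOn_Icc

private lemma le_of_deriv_nonneg' {a b : ℝ} (hab : a ≤ b) {p : ℝ → ℝ}
    (hc : ContinuousOn p (Set.Icc a b))
    (hd : ∀ x ∈ Set.Ioo a b, ∃ d, HasDerivAt p d x ∧ 0 ≤ d) : p a ≤ p b := by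
  have hmono := monotoneOn_of_deriv_nonneg (convex_Icc a b) hc ?_ ?_
  · exact hmono (Set.left_mem_Icc.2 hab) (Set.right_mem_Icc.2 hab) hab
  · intro x hx
    rw [interior_Icc] at hx
    obtain ⟨d, hd', _⟩ := hd x hx
    exact hd'.differentiableAt.differentiableWithinAt
  · intro x hx
    rw [interior_Icc] at hx
    obtain ⟨d, hd', hd0⟩ := hd x hx
    rw [hd'.deriv]
    exact hd0


private lemma arith_chle (G su φ H uxv : ℝ) (hgu : 0 < G + su) (hφ : 0 ≤ φ)
    (hsq : su * su = uxv) (hH : H ≤ G * G - uxv) :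
    φ / (G + su) * H ≤ φ * (G - su) := by
  rw [div_mul_eq_mul_div, div_le_iff₀ hgu]
  calc φ * H ≤ φ * (G * G - uxv) := mul_le_mul_of_nonneg_left hH hφ
    _ = φ * (G - su) * (G + su) := by rw [← hsq]; ring

private lemma arith_step (sA su Fx z φ E H G : ℝ) (hG : G = sA + Fx / 2)
    (hsA : 0 < sA) (hz : 0 ≤ z) (hF : 0 ≤ Fx) (hE : 0 < E)
    (hch : φ / (G + su) * H ≤ φ * (G - su)) :
    0 ≤ ((z / (2 * sA) + φ / 2) * G + G * (z / (2 * sA) + φ / 2) - z - φ * su) * E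
      + H * (E * -(φ / (G + su))) := by
  subst hG
  have hD : ((z / (2 * sA) + φ / 2) * (sA + Fx / 2)
        + (sA + Fx / 2) * (z / (2 * sA) + φ / 2) - z - φ * su) * E
        + H * (E * -(φ / ((sA + Fx / 2) + su)))
      = (φ * ((sA + Fx / 2) - su) + Fx * z / (2 * sA)
        - φ / ((sA + Fx / 2) + su) * H) * E := by
    field_simp
    ring
  rw [hD]
  have hrest : 0 ≤ Fx * z / (2 * sA) := div_nonneg (mul_nonneg hF hz) (by positivity)
  have hmain : 0 ≤ φ * ((sA + Fx / 2) - su) + Fx * z / (2 * sA)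
      - φ / ((sA + Fx / 2) + su) * H := by linarith
  exact mul_nonneg hmain hE.le

theorem stmt_2 (t₀ t₁ : ℝ) (ht : t₀ < t₁) (ζ ζ' f u : ℝ → ℝ)
    (hζ_deriv : ∀ t ∈ Set.Ico t₀ t₁, HasDerivAt ζ (ζ' t) t)
    (hζ'_cont : ContinuousOn ζ' (Set.Ico t₀ t₁))
    (hζ_nonneg : ∀ t ∈ Set.Ico t₀ t₁, 0 ≤ ζ t)
    (hf_cont : ContinuousOn f (Set.Ico t₀ t₁))
    (hf_nonneg : ∀ t ∈ Set.Ico t₀ t₁, 0 ≤ f t)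
    (hu_cont : ContinuousOn u (Set.Ico t₀ t₁))
    (hu_nonneg : ∀ t ∈ Set.Ico t₀ t₁, 0 ≤ u t)
    (hineq : ∀ t ∈ Set.Ico t₀ t₁,
      u t ≤ ζ t + ∫ s in t₀..t, f s * Real.sqrt (u s)) :
    ∀ t ∈ Set.Ico t₀ t₁,
      u t ≤ (Real.sqrt (ζ t₀ + ∫ s in t₀..t, |ζ' s|)
              + (1 / 2) * ∫ s in t₀..t, f s) ^ 2 := by
  intro T hT
  have hT0 : t₀ ≤ T := hT.1
  have ht₀ : t₀ ∈ Set.Ico t₀ t₁ := ⟨le_rfl, ht⟩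
  have hTm : T ∈ Set.Icc t₀ T := Set.right_mem_Icc.2 hT0
  have hsubIcc : Set.Icc t₀ T ⊆ Set.Ico t₀ t₁ :=
    fun x hx => ⟨hx.1, lt_of_le_of_lt hx.2 hT.2⟩
  set V : ℝ → ℝ := fun x => ∫ s in t₀..x, |ζ' s| with hVdef
  set F : ℝ → ℝ := fun x => ∫ s in t₀..x, f s with hFdef
  set W : ℝ → ℝ := fun x => ∫ s in t₀..x, f s * Real.sqrt (u s) with hWdef
  have hζ'a : ContinuousOn (fun s => |ζ' s|) (Set.Icc t₀ T) := (hζ'_cont.mono hsubIcc).abs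
  have hfc : ContinuousOn f (Set.Icc t₀ T) := hf_cont.mono hsubIcc
  have hsu : ContinuousOn (fun s => Real.sqrt (u s)) (Set.Icc t₀ T) :=
    Real.continuous_sqrt.comp_continuousOn (hu_cont.mono hsubIcc)
  have hfu : ContinuousOn (fun s => f s * Real.sqrt (u s)) (Set.Icc t₀ T) := hfc.mul hsu
  have hVc : ContinuousOn V (Set.Icc t₀ T) := prim_cont' hT0 hζ'a
  have hFc : ContinuousOn F (Set.Icc t₀ T) := prim_cont' hT0 hfc
  have hWc : ContinuousOn W (Set.Icc t₀ T) := prim_cont' hT0 hfu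
  have hVnn : ∀ x ∈ Set.Icc t₀ T, 0 ≤ V x := fun x hx =>
    intervalIntegral.integral_nonneg hx.1 (fun s _ => abs_nonneg _)
  have hFnn : ∀ x ∈ Set.Icc t₀ T, 0 ≤ F x := fun x hx =>
    intervalIntegral.integral_nonneg hx.1
      (fun s hs => hf_nonneg s (hsubIcc ⟨hs.1, hs.2.trans hx.2⟩))
  have hζ0 : 0 ≤ ζ t₀ := hζ_nonneg t₀ ht₀
  have hζ_bound : ∀ x ∈ Set.Icc t₀ T, ζ x ≤ ζ t₀ + V x := by
    intro x hx
    have hsub : Set.uIcc t₀ x ⊆ Set.Icc t₀ T := by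
      rw [Set.uIcc_of_le hx.1]
      exact Set.Icc_subset_Icc le_rfl hx.2
    have hint : IntervalIntegrable ζ' MeasureTheory.volume t₀ x :=
      ((hζ'_cont.mono hsubIcc).mono hsub).intervalIntegrable
    have hftc : ∫ s in t₀..x, ζ' s = ζ x - ζ t₀ :=
      intervalIntegral.integral_eq_sub_of_hasDerivAt
        (fun s hs => hζ_deriv s (hsubIcc (hsub hs))) hint
    have hmono : (∫ s in t₀..x, ζ' s) ≤ ∫ s in t₀..x, |ζ' s| :=
      intervalIntegral.integral_mono_on hx.1 hint
        ((hζ'a.mono hsub).intervalIntegrable) (fun s _ => le_abs_self _)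
    show ζ x ≤ ζ t₀ + ∫ s in t₀..x, |ζ' s|
    linarith
  -- Key estimate for each ε > 0
  have key : ∀ ε > (0:ℝ), Real.sqrt (u T) ≤ Real.sqrt (ζ t₀ + ε + V T) + F T / 2 := by
    intro ε hε
    set A : ℝ → ℝ := fun x => ζ t₀ + ε + V x with hAdef
    set g : ℝ → ℝ := fun x => Real.sqrt (A x) + F x / 2 with hgdef
    set c : ℝ → ℝ := fun x => f x / (g x + Real.sqrt (u x)) with hcdef
    set h : ℝ → ℝ := fun x => g x * g x - A x - W x with hhdef
    have hApos : ∀ x ∈ Set.Icc t₀ T, 0 < A x := by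
      intro x hx
      have h1 := hVnn x hx
      have h2 : A x = ζ t₀ + ε + V x := rfl
      rw [h2]; linarith
    have hgpos : ∀ x ∈ Set.Icc t₀ T, 0 < g x := by
      intro x hx
      have h1 : 0 < Real.sqrt (A x) := Real.sqrt_pos.2 (hApos x hx)
      have h2 : 0 ≤ F x := hFnn x hx
      have h3 : g x = Real.sqrt (A x) + F x / 2 := rfl
      rw [h3]; linarith
    have hgupos : ∀ x ∈ Set.Icc t₀ T, 0 < g x + Real.sqrt (u x) := by
      intro x hx
      have := Real.sqrt_nonneg (u x)
      linarith [hgpos x hx]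
    have hAc : ContinuousOn A (Set.Icc t₀ T) := continuousOn_const.add hVc
    have hgc : ContinuousOn g (Set.Icc t₀ T) :=
      (Real.continuous_sqrt.comp_continuousOn hAc).add (hFc.div_const 2)
    have hcc : ContinuousOn c (Set.Icc t₀ T) :=
      hfc.div (hgc.add hsu) (fun x hx => (hgupos x hx).ne')
    set C : ℝ → ℝ := fun x => ∫ s in t₀..x, c s with hCdef
    set p : ℝ → ℝ := fun x => h x * Real.exp (-C x) with hpdef
    have hCc : ContinuousOn C (Set.Icc t₀ T) := prim_cont' hT0 hcc
    have hhc : ContinuousOn h (Set.Icc t₀ T) := ((hgc.mul hgc).sub hAc).sub hWc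
    have hpc : ContinuousOn p (Set.Icc t₀ T) :=
      hhc.mul (Real.continuous_exp.comp_continuousOn hCc.neg)
    have hu_bound : ∀ x ∈ Set.Icc t₀ T, u x ≤ A x + W x - ε := by
      intro x hx
      have h1 : u x ≤ ζ x + W x := hineq x (hsubIcc hx)
      have h2 : ζ x ≤ ζ t₀ + V x := hζ_bound x hx
      have h3 : A x = ζ t₀ + ε + V x := rfl
      rw [h3]; linarith
    have hpT : p t₀ ≤ p T := by
      apply le_of_deriv_nonneg' hT0 hpc
      intro x hx
      have hxI : x ∈ Set.Icc t₀ T := Set.Ioo_subset_Icc_self hx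
      have hxIco : x ∈ Set.Ico t₀ t₁ := hsubIcc hxI
      have hAx : 0 < A x := hApos x hxI
      have hsA : 0 < Real.sqrt (A x) := Real.sqrt_pos.2 hAx
      have hgx : 0 < g x := hgpos x hxI
      have hgux : 0 < g x + Real.sqrt (u x) := hgupos x hxI
      have hsun : 0 ≤ Real.sqrt (u x) := Real.sqrt_nonneg _
      have hfxn : 0 ≤ f x := hf_nonneg x hxIco
      have hFxn : 0 ≤ F x := hFnn x hxI
      have hzxn : 0 ≤ |ζ' x| := abs_nonneg _
      have hVd : HasDerivAt V (|ζ' x|) x := prim_deriv' hζ'a hx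
      have hFd : HasDerivAt F (f x) x := prim_deriv' hfc hx
      have hWd : HasDerivAt W (f x * Real.sqrt (u x)) x := prim_deriv' hfu hx
      have hCd : HasDerivAt C (c x) x := prim_deriv' hcc hx
      have hAd : HasDerivAt A (|ζ' x|) x := hVd.const_add _
      have hgd : HasDerivAt g (|ζ' x| / (2 * Real.sqrt (A x)) + f x / 2) x :=
        (hAd.sqrt hAx.ne').add (hFd.div_const 2)
      have hEd : HasDerivAt (fun y => Real.exp (-C y)) (Real.exp (-C x) * -c x) x :=
        hCd.neg.exp
      have hEpos : 0 < Real.exp (-C x) := Real.exp_pos _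
      have hsq : Real.sqrt (u x) * Real.sqrt (u x) = u x :=
        Real.mul_self_sqrt (hu_nonneg x hxIco)
      have h1 : h x ≤ g x * g x - u x := by
        have hb := hu_bound x hxI
        have hh : h x = g x * g x - A x - W x := rfl
        rw [hh]; linarith
      have hch : f x / (g x + Real.sqrt (u x)) * h x
          ≤ f x * (g x - Real.sqrt (u x)) :=
        arith_chle (g x) (Real.sqrt (u x)) (f x) (h x) (u x) hgux hfxn hsq h1
      refine ⟨_, (((hgd.mul hgd).sub hAd).sub hWd).mul hEd, ?_⟩
      exact arith_step (Real.sqrt (A x)) (Real.sqrt (u x)) (F x) |ζ' x| (f x)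
        (Real.exp (-C x)) (h x) (g x) rfl hsA hzxn hFxn hEpos hch
    have hW0 : W t₀ = 0 := intervalIntegral.integral_same
    have hF0 : F t₀ = 0 := intervalIntegral.integral_same
    have hA0 : 0 < A t₀ := hApos t₀ (Set.left_mem_Icc.2 hT0)
    have hg0 : g t₀ * g t₀ = A t₀ := by
      have h1 : g t₀ = Real.sqrt (A t₀) + F t₀ / 2 := rfl
      rw [h1, hF0]
      simp [Real.mul_self_sqrt hA0.le]
    have hp0 : p t₀ = 0 := by
      have h1 : p t₀ = (g t₀ * g t₀ - A t₀ - W t₀) * Real.exp (-C t₀) := rfl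
      rw [h1, hg0, hW0]; ring
    have hhT : 0 ≤ h T := by
      have h1 : p T = h T * Real.exp (-C T) := rfl
      have h2 : 0 ≤ h T * Real.exp (-C T) := by rw [← h1, ← hp0]; exact hpT
      by_contra hneg
      push_neg at hneg
      have := mul_neg_of_neg_of_pos hneg (Real.exp_pos (-C T))
      linarith
    have huT : u T ≤ g T * g T := by
      have hb := hu_bound T hTm
      have hh : h T = g T * g T - A T - W T := rfl
      rw [hh] at hhT
      linarith
    have hsT : Real.sqrt (u T) ≤ g T := by
      have h1 : Real.sqrt (u T) ≤ Real.sqrt (g T * g T) := Real.sqrt_le_sqrt huT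
      rwa [Real.sqrt_mul_self (hgpos T hTm).le] at h1
    exact hsT
  -- pass to the limit ε → 0⁺
  have hlim : Filter.Tendsto (fun ε : ℝ => Real.sqrt (ζ t₀ + ε + V T) + F T / 2)
      (nhdsWithin 0 (Set.Ioi 0)) (nhds (Real.sqrt (ζ t₀ + 0 + V T) + F T / 2)) := by
    apply Filter.Tendsto.mono_left _ nhdsWithin_le_nhds
    have hcont : Continuous (fun ε : ℝ => Real.sqrt (ζ t₀ + ε + V T) + F T / 2) :=
      (Real.continuous_sqrt.comp ((continuous_const.add continuous_id).add
        continuous_const)).add continuous_const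
    exact hcont.tendsto 0
  have hle : Real.sqrt (u T) ≤ Real.sqrt (ζ t₀ + 0 + V T) + F T / 2 := by
    refine ge_of_tendsto hlim ?_
    filter_upwards [self_mem_nhdsWithin] with ε hε
    exact key ε hε
  have hfin : u T ≤ (Real.sqrt (ζ t₀ + 0 + V T) + F T / 2) ^ 2 := by
    have h1 : u T = Real.sqrt (u T) ^ 2 := (Real.sq_sqrt (hu_nonneg T (hsubIcc hTm))).symm
    rw [h1]
    exact pow_le_pow_left₀ (Real.sqrt_nonneg _) hle 2
  have heq : Real.sqrt (ζ t₀ + 0 + V T) + F T / 2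
      = Real.sqrt (ζ t₀ + V T) + (1 / 2) * F T := by
    rw [show ζ t₀ + 0 + V T = ζ t₀ + V T by ring]
    ring
  rw [heq] at hfin
  exact hfin
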